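/- arXiv:2101.00838 — 2 statements merged into one kernel-verified Lean document; each statement's English description precedes it below -/
import Mathlib

section
/- For every positive integer 𝒦 and every z ∈ Z, g(z,𝒦) − g(z) ≤ 2 (ℛ_max − ℛ_min) / 𝒦 (and g(z,𝒦) ≥ g(z)); consequently g(z,𝒦) converges to g(z) as 𝒦 → ∞, uniformly with respect to z ∈ Z. -/
open MeasureTheory Metric Set Filter
open scoped ENNReal NNReal

noncomputable section

abbrev Vec (n : ℕ) := EuclideanSpace ℝ (Fin n)

/-- zᵀξ -/
def dotp {n : ℕ} (z ξ : Vec n) : ℝ := ∑ i, z i * ξ i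

/-- φ(η,z,ξ) = (η − zᵀξ)₊ − (η − z₀ᵀξ)₊ -/
def phi {n : ℕ} (z₀ : Vec n) (η : ℝ) (z ξ : Vec n) : ℝ :=
  max (η - dotp z ξ) 0 - max (η - dotp z₀ ξ) 0

/-- P is a Borel probability measure supported on Ξ with finite first moment. -/
def MemP {n : ℕ} (Ξ : Set (Vec n)) (P : Measure (Vec n)) : Prop :=
  IsProbabilityMeasure P ∧ P Ξᶜ = 0 ∧ Integrable (fun ξ => ‖ξ‖) P

/-- Kantorovich (1-Wasserstein) metric: supremum over 1-Lipschitz test functions. -/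
def dK {n : ℕ} (P Q : Measure (Vec n)) : ℝ :=
  ⨆ h : {h : Vec n → ℝ // LipschitzWith 1 h},
    |∫ ξ, h.1 ξ ∂P - ∫ ξ, h.1 ξ ∂Q|

/-- Empirical distribution P̂_N = (1/N) ∑ᵢ δ_{ξ̂ᵢ}. -/
def empirical {n N : ℕ} (s : Fin N → Vec n) : Measure (Vec n) :=
  (N : ℝ≥0∞)⁻¹ • ∑ i, Measure.dirac (s i)

/-- Wasserstein ball of radius ε around Phat, of probability measures supported on Ξ. -/
def wball {n : ℕ} (Ξ : Set (Vec n)) (Phat : Measure (Vec n)) (ε : ℝ) :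
    Set (Measure (Vec n)) :=
  {P | MemP Ξ P ∧ dK P Phat ≤ ε}

/-- w(z) = sup_{η∈R} sup_{P∈Q} E_P[φ(η,z,ξ)]. -/
def wFun {n : ℕ} (R : Set ℝ) (Q : Set (Measure (Vec n))) (z₀ z : Vec n) : ℝ :=
  sSup {r | ∃ η ∈ R, ∃ P ∈ Q, r = ∫ ξ, phi z₀ η z ξ ∂P}

/-- deviation 𝔻(A,B) = sup_{x∈A} dist(x,B). -/
def dev {X : Type*} [PseudoMetricSpace X] (A B : Set X) : ℝ :=
  sSup ((fun x => infDist x B) '' A)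

/-- Hausdorff distance ℍ(A,B) = max{𝔻(A,B), 𝔻(B,A)}. -/
def hdistP {X : Type*} [PseudoMetricSpace X] (A B : Set X) : ℝ :=
  max (dev A B) (dev B A)

/-- Z is a polyhedral set. -/
def IsPolyhedral {n : ℕ} (Z : Set (Vec n)) : Prop :=
  ∃ (m : ℕ) (A : Fin m → Vec n) (b : Fin m → ℝ), Z = {z | ∀ i, dotp (A i) z ≤ b i}


/-- sup_{η ∈ [a,b]} φ(η,z,ξ) -/
def phiSup {n : ℕ} (z₀ z : Vec n) (a b : ℝ) (ξ : Vec n) : ℝ :=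
  sSup ((fun η => phi z₀ η z ξ) '' Set.Icc a b)

/-- g(z,𝒦) = max_{1≤k≤𝒦} sup_{P∈𝒬} E_P[ sup_{η∈[η̲ₖ,η̄ₖ]} φ(η,z,ξ) ], where
[η̲ₖ,η̄ₖ], k = 1,…,𝒦, are the 𝒦 equal sub-intervals of [ℛ_min, ℛ_max]. -/
def gSplit {n : ℕ} (Q : Set (Measure (Vec n))) (z₀ : Vec n) (Rmin Rmax : ℝ) (K : ℕ)
    (z : Vec n) : ℝ :=
  sSup {r : ℝ | ∃ k < K, ∃ P ∈ Q,
    r = ∫ ξ, phiSup z₀ z (Rmin + k * (Rmax - Rmin) / K)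
        (Rmin + (k + 1) * (Rmax - Rmin) / K) ξ ∂P}

/-! ### Auxiliary lemmas -/

section Aux

lemma abs_dotp_le {n : ℕ} (z ξ : Vec n) : |dotp z ξ| ≤ ‖z‖ * ‖ξ‖ := by
  have : dotp z ξ = inner ℝ z ξ := by
    simp [dotp, PiLp.inner_apply, RCLike.inner_apply, mul_comm]
  rw [this]; exact abs_real_inner_le_norm z ξ

lemma dotp_sub' {n : ℕ} (z x y : Vec n) : dotp z (x - y) = dotp z x - dotp z y := by
  simp [dotp, mul_sub, Finset.sum_sub_distrib]

lemma dotp_sub {n : ℕ} (x y ξ : Vec n) : dotp (x - y) ξ = dotp x ξ - dotp y ξ := by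
  simp [dotp, sub_mul, Finset.sum_sub_distrib]

lemma abs_phi_le {n : ℕ} (z₀ z : Vec n) (η : ℝ) (ξ : Vec n) :
    |phi z₀ η z ξ| ≤ ‖z - z₀‖ * ‖ξ‖ := by
  have h1 : |phi z₀ η z ξ| ≤ |(η - dotp z ξ) - (η - dotp z₀ ξ)| :=
    abs_max_sub_max_le_abs _ _ _
  have h2 : (η - dotp z ξ) - (η - dotp z₀ ξ) = dotp (z₀ - z) ξ := by
    rw [dotp_sub]; ring
  calc |phi z₀ η z ξ| ≤ |dotp (z₀ - z) ξ| := by rw [← h2]; exact h1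
    _ ≤ ‖z₀ - z‖ * ‖ξ‖ := abs_dotp_le _ _
    _ = ‖z - z₀‖ * ‖ξ‖ := by rw [norm_sub_rev]

lemma abs_phi_sub_phi_eta {n : ℕ} (z₀ z : Vec n) (η η' : ℝ) (ξ : Vec n) :
    |phi z₀ η z ξ - phi z₀ η' z ξ| ≤ 2 * |η - η'| := by
  have h1 : |max (η - dotp z ξ) 0 - max (η' - dotp z ξ) 0| ≤ |η - η'| := by
    have := abs_max_sub_max_le_abs (η - dotp z ξ) (η' - dotp z ξ) 0
    simpa using this
  have h2 : |max (η - dotp z₀ ξ) 0 - max (η' - dotp z₀ ξ) 0| ≤ |η - η'| := by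
    have := abs_max_sub_max_le_abs (η - dotp z₀ ξ) (η' - dotp z₀ ξ) 0
    simpa using this
  have he : phi z₀ η z ξ - phi z₀ η' z ξ =
      (max (η - dotp z ξ) 0 - max (η' - dotp z ξ) 0)
      - (max (η - dotp z₀ ξ) 0 - max (η' - dotp z₀ ξ) 0) := by
    simp [phi]; ring
  rw [he]
  calc _ ≤ |max (η - dotp z ξ) 0 - max (η' - dotp z ξ) 0| +
      |max (η - dotp z₀ ξ) 0 - max (η' - dotp z₀ ξ) 0| := abs_sub _ _
    _ ≤ |η - η'| + |η - η'| := add_le_add h1 h2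
    _ = 2 * |η - η'| := by ring

lemma abs_phi_sub_phi_xi {n : ℕ} (z₀ z : Vec n) (η : ℝ) (ξ ξ' : Vec n) :
    |phi z₀ η z ξ - phi z₀ η z ξ'| ≤ (‖z‖ + ‖z₀‖) * ‖ξ - ξ'‖ := by
  have h1 : |max (η - dotp z ξ) 0 - max (η - dotp z ξ') 0| ≤ ‖z‖ * ‖ξ - ξ'‖ := by
    have h := abs_max_sub_max_le_abs (η - dotp z ξ) (η - dotp z ξ') 0
    have e : (η - dotp z ξ) - (η - dotp z ξ') = dotp z ξ' - dotp z ξ := by ring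
    calc |max (η - dotp z ξ) 0 - max (η - dotp z ξ') 0|
        ≤ |(η - dotp z ξ) - (η - dotp z ξ')| := h
      _ = |dotp z (ξ' - ξ)| := by rw [e, ← dotp_sub']
      _ ≤ ‖z‖ * ‖ξ' - ξ‖ := abs_dotp_le _ _
      _ = ‖z‖ * ‖ξ - ξ'‖ := by rw [norm_sub_rev]
  have h2 : |max (η - dotp z₀ ξ) 0 - max (η - dotp z₀ ξ') 0| ≤ ‖z₀‖ * ‖ξ - ξ'‖ := by
    have h := abs_max_sub_max_le_abs (η - dotp z₀ ξ) (η - dotp z₀ ξ') 0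
    have e : (η - dotp z₀ ξ) - (η - dotp z₀ ξ') = dotp z₀ ξ' - dotp z₀ ξ := by ring
    calc |max (η - dotp z₀ ξ) 0 - max (η - dotp z₀ ξ') 0|
        ≤ |(η - dotp z₀ ξ) - (η - dotp z₀ ξ')| := h
      _ = |dotp z₀ (ξ' - ξ)| := by rw [e, ← dotp_sub']
      _ ≤ ‖z₀‖ * ‖ξ' - ξ‖ := abs_dotp_le _ _
      _ = ‖z₀‖ * ‖ξ - ξ'‖ := by rw [norm_sub_rev]
  have he : phi z₀ η z ξ - phi z₀ η z ξ' =
      (max (η - dotp z ξ) 0 - max (η - dotp z ξ') 0)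
      - (max (η - dotp z₀ ξ) 0 - max (η - dotp z₀ ξ') 0) := by
    simp [phi]; ring
  rw [he]
  calc _ ≤ _ + _ := abs_sub _ _
    _ ≤ ‖z‖ * ‖ξ - ξ'‖ + ‖z₀‖ * ‖ξ - ξ'‖ := add_le_add h1 h2
    _ = (‖z‖ + ‖z₀‖) * ‖ξ - ξ'‖ := by ring

variable {n : ℕ} (z₀ z : Vec n) (a b : ℝ) (ξ : Vec n)

lemma phiSup_bddAbove : BddAbove ((fun η => phi z₀ η z ξ) '' Set.Icc a b) := by
  refine ⟨‖z - z₀‖ * ‖ξ‖, ?_⟩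
  rintro r ⟨η, -, rfl⟩
  exact (abs_le.mp (abs_phi_le z₀ z η ξ)).2

lemma phi_le_phiSup {η : ℝ} (hη : η ∈ Set.Icc a b) :
    phi z₀ η z ξ ≤ phiSup z₀ z a b ξ :=
  le_csSup (phiSup_bddAbove z₀ z a b ξ) ⟨η, hη, rfl⟩

lemma phiSup_le (hab : a ≤ b) : phiSup z₀ z a b ξ ≤ phi z₀ a z ξ + 2 * (b - a) := by
  apply csSup_le (by simpa using Set.nonempty_Icc.mpr hab)
  rintro r ⟨η, hη, rfl⟩
  have h := abs_phi_sub_phi_eta z₀ z η a ξ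
  have h' : phi z₀ η z ξ - phi z₀ a z ξ ≤ 2 * |η - a| := (abs_le.mp h).2.trans_eq' rfl
  have habs : |η - a| ≤ b - a := by
    rw [abs_of_nonneg (by linarith [hη.1])]; linarith [hη.2]
  nlinarith [h', habs]

lemma abs_phiSup_le (hab : a ≤ b) : |phiSup z₀ z a b ξ| ≤ ‖z - z₀‖ * ‖ξ‖ := by
  rw [abs_le]
  constructor
  · calc -(‖z - z₀‖ * ‖ξ‖) ≤ phi z₀ a z ξ := (abs_le.mp (abs_phi_le z₀ z a ξ)).1
      _ ≤ phiSup z₀ z a b ξ := phi_le_phiSup z₀ z a b ξ (Set.left_mem_Icc.mpr hab)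
  · apply csSup_le (by simpa using Set.nonempty_Icc.mpr hab)
    rintro r ⟨η, -, rfl⟩
    exact (abs_le.mp (abs_phi_le z₀ z η ξ)).2

lemma phiSup_lip (hab : a ≤ b) (ξ' : Vec n) :
    phiSup z₀ z a b ξ ≤ phiSup z₀ z a b ξ' + (‖z‖ + ‖z₀‖) * ‖ξ - ξ'‖ := by
  apply csSup_le (by simpa using Set.nonempty_Icc.mpr hab)
  rintro r ⟨η, hη, rfl⟩
  have h1 : phi z₀ η z ξ ≤ phi z₀ η z ξ' + (‖z‖ + ‖z₀‖) * ‖ξ - ξ'‖ := by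
    have := (abs_le.mp (abs_phi_sub_phi_xi z₀ z η ξ ξ')).2; linarith
  exact h1.trans (by linarith [phi_le_phiSup z₀ z a b ξ' hη])

lemma phiSup_continuous (hab : a ≤ b) : Continuous (phiSup z₀ z a b) := by
  have hl : LipschitzWith (‖z‖ + ‖z₀‖).toNNReal (phiSup z₀ z a b) := by
    apply LipschitzWith.of_dist_le_mul
    intro x y
    rw [Real.dist_eq, Real.coe_toNNReal _ (by positivity), dist_eq_norm, abs_le]
    constructor
    · have := phiSup_lip z₀ z a b y hab x
      rw [norm_sub_rev]; linarith
    · have := phiSup_lip z₀ z a b x hab y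
      linarith
  exact hl.continuous

lemma phi_continuous (η : ℝ) : Continuous (fun ξ => phi z₀ η z ξ) := by
  have hd : ∀ w : Vec n, Continuous (fun ξ : Vec n => dotp w ξ) := by
    intro w
    unfold dotp
    exact continuous_finset_sum _ fun i _ =>
      (continuous_const.mul ((continuous_apply i).comp (PiLp.continuous_ofLp 2 _)))
  unfold phi
  exact ((continuous_const.sub (hd z)).max continuous_const).sub
    ((continuous_const.sub (hd z₀)).max continuous_const)

end Aux

lemma exists_subinterval {K : ℕ} (hK : 1 ≤ K) {Rmin Rmax η : ℝ} (hRmm : Rmin ≤ Rmax)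
    (hη : η ∈ Set.Icc Rmin Rmax) :
    ∃ k < K, Rmin + (k : ℝ) * (Rmax - Rmin) / K ≤ η ∧
      η ≤ Rmin + ((k : ℝ) + 1) * (Rmax - Rmin) / K := by
  obtain ⟨hη1, hη2⟩ := hη
  have hK0 : (0:ℝ) < K := by exact_mod_cast hK
  rcases eq_or_lt_of_le hRmm with heq | hlt
  · refine ⟨0, hK, ?_, ?_⟩ <;> push_cast <;> rw [← heq] <;> simp <;> linarith
  · have hΔ0 : 0 < Rmax - Rmin := by linarith
    set t := (η - Rmin) * K / (Rmax - Rmin) with ht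
    have ht0 : 0 ≤ t :=
      div_nonneg (mul_nonneg (by linarith) hK0.le) hΔ0.le
    set k := min (K - 1) ⌊t⌋₊ with hk
    have hkK : k < K := lt_of_le_of_lt (min_le_left _ _) (by omega)
    have htΔ : t * (Rmax - Rmin) = (η - Rmin) * K := by rw [ht, div_mul_cancel₀ _ hΔ0.ne']
    refine ⟨k, hkK, ?_, ?_⟩
    · have h1 : (k : ℝ) ≤ t :=
        le_trans (by exact_mod_cast min_le_right (K-1) ⌊t⌋₊) (Nat.floor_le ht0)
      have h3 : (k:ℝ) * (Rmax - Rmin) / K ≤ η - Rmin := by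
        rw [div_le_iff₀ hK0]; nlinarith
      linarith
    · rcases le_or_gt ⌊t⌋₊ (K - 1) with hc | hc
      · have hk' : k = ⌊t⌋₊ := min_eq_right hc
        have h1 : t ≤ (k:ℝ) + 1 := by
          rw [hk']; exact (Nat.lt_floor_add_one t).le
        have h3 : η - Rmin ≤ ((k:ℝ) + 1) * (Rmax - Rmin) / K := by
          rw [le_div_iff₀ hK0]; nlinarith
        linarith
      · have hk' : k = K - 1 := min_eq_left hc.le
        have h1 : (k:ℝ) + 1 = K := by
          rw [hk', Nat.cast_sub hK]; ring
        rw [h1]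
        have h2 : (K:ℝ) * (Rmax - Rmin) / K = Rmax - Rmin := by field_simp
        rw [h2]; linarith

section Key
variable {n : ℕ} (z₀ z : Vec n)

lemma phi_integrable {P : Measure (Vec n)} (hP : Integrable (fun ξ => ‖ξ‖) P) (η : ℝ) :
    Integrable (fun ξ => phi z₀ η z ξ) P := by
  refine (hP.const_mul ‖z - z₀‖).mono
    ((phi_continuous z₀ z η).aestronglyMeasurable) (ae_of_all _ fun ξ => ?_)
  rw [Real.norm_eq_abs, Real.norm_eq_abs,
    abs_of_nonneg (by positivity : (0:ℝ) ≤ ‖z - z₀‖ * ‖ξ‖)]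
  simpa using abs_phi_le z₀ z η ξ

lemma phiSup_integrable {P : Measure (Vec n)} (hP : Integrable (fun ξ => ‖ξ‖) P)
    {a b : ℝ} (hab : a ≤ b) :
    Integrable (fun ξ => phiSup z₀ z a b ξ) P := by
  refine (hP.const_mul ‖z - z₀‖).mono
    ((phiSup_continuous z₀ z a b hab).aestronglyMeasurable) (ae_of_all _ fun ξ => ?_)
  rw [Real.norm_eq_abs, Real.norm_eq_abs,
    abs_of_nonneg (by positivity : (0:ℝ) ≤ ‖z - z₀‖ * ‖ξ‖)]
  simpa using abs_phiSup_le z₀ z a b ξ hab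

lemma key_ineq {Rmin Rmax : ℝ} (hRmm : Rmin ≤ Rmax) (Q : Set (Measure (Vec n)))
    (hQmem : ∀ P ∈ Q, IsProbabilityMeasure P ∧ Integrable (fun ξ => ‖ξ‖) P)
    (K : ℕ) (hK : 1 ≤ K) :
    wFun (Set.Icc Rmin Rmax) Q z₀ z ≤ gSplit Q z₀ Rmin Rmax K z ∧
      gSplit Q z₀ Rmin Rmax K z - wFun (Set.Icc Rmin Rmax) Q z₀ z
        ≤ 2 * (Rmax - Rmin) / K := by
  have hK0 : (0:ℝ) < K := by exact_mod_cast hK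
  set S1 : Set ℝ := {r | ∃ η ∈ Set.Icc Rmin Rmax, ∃ P ∈ Q, r = ∫ ξ, phi z₀ η z ξ ∂P}
    with hS1
  set S2 : Set ℝ := {r : ℝ | ∃ k < K, ∃ P ∈ Q,
      r = ∫ ξ, phiSup z₀ z (Rmin + k * (Rmax - Rmin) / K)
          (Rmin + (k + 1) * (Rmax - Rmin) / K) ξ ∂P} with hS2
  have habk : ∀ k : ℕ, Rmin + (k:ℝ) * (Rmax - Rmin) / K
      ≤ Rmin + ((k:ℝ) + 1) * (Rmax - Rmin) / K := by
    intro k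
    have h : (k:ℝ) * (Rmax - Rmin) / K ≤ ((k:ℝ) + 1) * (Rmax - Rmin) / K := by
      rw [div_le_div_iff₀ hK0 hK0]; nlinarith
    linarith
  have hA : ∀ r ∈ S1, ∃ r' ∈ S2, r ≤ r' := by
    rintro r ⟨η, hη, P, hPQ, rfl⟩
    obtain ⟨hprob, hint⟩ := hQmem P hPQ
    obtain ⟨k, hkK, hk1, hk2⟩ := exists_subinterval hK hRmm hη
    refine ⟨_, ⟨k, hkK, P, hPQ, rfl⟩, ?_⟩
    exact integral_mono (phi_integrable z₀ z hint η)
      (phiSup_integrable z₀ z hint (habk k))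
      (fun ξ => phi_le_phiSup z₀ z _ _ ξ ⟨hk1, hk2⟩)
  have hB : ∀ r' ∈ S2, ∃ r ∈ S1, r' ≤ r + 2 * (Rmax - Rmin) / K := by
    rintro r ⟨k, hkK, P, hPQ, rfl⟩
    obtain ⟨hprob, hint⟩ := hQmem P hPQ
    haveI := hprob
    set a := Rmin + (k:ℝ) * (Rmax - Rmin) / K with ha
    set b := Rmin + ((k:ℝ) + 1) * (Rmax - Rmin) / K with hb
    have haI : a ∈ Set.Icc Rmin Rmax := by
      constructor
      · have h0 : 0 ≤ (k:ℝ) * (Rmax - Rmin) / K :=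
          div_nonneg (mul_nonneg (Nat.cast_nonneg k) (by linarith)) hK0.le
        simp only [ha]; linarith
      · have hkK' : (k:ℝ) ≤ K := by exact_mod_cast hkK.le
        have h1 : (k:ℝ) * (Rmax - Rmin) / K ≤ Rmax - Rmin := by
          rw [div_le_iff₀ hK0]; nlinarith
        simp only [ha]; linarith
    refine ⟨∫ ξ, phi z₀ a z ξ ∂P, ⟨a, haI, P, hPQ, rfl⟩, ?_⟩
    have hc : 2 * (b - a) = 2 * (Rmax - Rmin) / K := by
      simp only [ha, hb]; ring
    calc (∫ ξ, phiSup z₀ z a b ξ ∂P)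
        ≤ ∫ ξ, (phi z₀ a z ξ + 2 * (Rmax - Rmin) / K) ∂P := by
          apply integral_mono (phiSup_integrable z₀ z hint (habk k))
            ((phi_integrable z₀ z hint a).add (integrable_const _))
          intro ξ
          have h := phiSup_le z₀ z a b ξ (habk k)
          rw [hc] at h
          exact h
      _ = (∫ ξ, phi z₀ a z ξ ∂P) + 2 * (Rmax - Rmin) / K := by
          rw [integral_add (phi_integrable z₀ z hint a) (integrable_const _),
            integral_const]
          simp
  have hgs : gSplit Q z₀ Rmin Rmax K z = sSup S2 := rfl
  have hgw : wFun (Set.Icc Rmin Rmax) Q z₀ z = sSup S1 := rfl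
  rw [hgs, hgw]
  have hcnn : 0 ≤ 2 * (Rmax - Rmin) / K := div_nonneg (by linarith) hK0.le
  rcases Set.eq_empty_or_nonempty S2 with h2e | h2ne
  · have h1e : S1 = ∅ := by
      rw [Set.eq_empty_iff_forall_notMem]
      intro r hr
      obtain ⟨r', hr', -⟩ := hA r hr
      rw [h2e] at hr'; exact hr'
    rw [h2e, h1e, Real.sSup_empty]
    exact ⟨le_refl _, by linarith⟩
  by_cases h2b : BddAbove S2
  · have h1ne : S1.Nonempty := by
      obtain ⟨r', hr'⟩ := h2ne
      obtain ⟨r, hr, -⟩ := hB r' hr'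
      exact ⟨r, hr⟩
    have h1b : BddAbove S1 := by
      obtain ⟨M, hM⟩ := h2b
      refine ⟨M, fun r hr => ?_⟩
      obtain ⟨r', hr', hle⟩ := hA r hr
      exact hle.trans (hM hr')
    constructor
    · apply csSup_le h1ne
      intro r hr
      obtain ⟨r', hr', hle⟩ := hA r hr
      exact hle.trans (le_csSup h2b hr')
    · rw [sub_le_iff_le_add, add_comm]
      apply csSup_le h2ne
      intro r' hr'
      obtain ⟨r, hr, hle⟩ := hB r' hr'
      exact hle.trans (by linarith [le_csSup h1b hr])
  · have h1b : ¬ BddAbove S1 := by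
      intro hbd
      obtain ⟨M, hM⟩ := hbd
      apply h2b
      refine ⟨M + 2 * (Rmax - Rmin) / K, fun r' hr' => ?_⟩
      obtain ⟨r, hr, hle⟩ := hB r' hr'
      exact hle.trans (by linarith [hM hr])
    rw [Real.sSup_of_not_bddAbove h2b, Real.sSup_of_not_bddAbove h1b]
    exact ⟨le_refl _, by linarith⟩

end Key

/-- For every positive integer 𝒦 and every z ∈ Z: g(z) ≤ g(z,𝒦) and
g(z,𝒦) − g(z) ≤ 2(ℛ_max − ℛ_min)/𝒦; consequently g(·,𝒦) → g(·) uniformly on Z as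
𝒦 → ∞. -/
theorem stmt7 {n N l : ℕ}
    (C : Fin l → Vec n) (dv : Fin l → ℝ)
    (Ξ : Set (Vec n)) (hΞ : Ξ = {ξ | ∀ i, dotp (C i) ξ ≤ dv i})
    (Z : Set (Vec n)) (hZpoly : IsPolyhedral Z) (hZbdd : Bornology.IsBounded Z)
    (z₀ : Vec n) (hz₀ : z₀ ∈ Z)
    (Rmin Rmax : ℝ) (hRmm : Rmin ≤ Rmax)
    (hR : (fun ξ => dotp z₀ ξ) '' Ξ = Set.Icc Rmin Rmax)
    (samples : Fin N → Vec n) (hs : ∀ i, samples i ∈ Ξ)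
    (ε : ℝ) (hε : 0 < ε)
    (Q : Set (Measure (Vec n))) (hQ : Q = wball Ξ (empirical samples) ε)
    (g : Vec n → ℝ) (hg : g = wFun (Set.Icc Rmin Rmax) Q z₀) :
    (∀ K : ℕ, 1 ≤ K → ∀ z ∈ Z,
      g z ≤ gSplit Q z₀ Rmin Rmax K z ∧
      gSplit Q z₀ Rmin Rmax K z - g z ≤ 2 * (Rmax - Rmin) / K) ∧
    TendstoUniformlyOn (fun (K : ℕ) (z : Vec n) => gSplit Q z₀ Rmin Rmax K z) g
      Filter.atTop Z := by
  subst hg hQ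
  have hQmem : ∀ P ∈ wball Ξ (empirical samples) ε,
      IsProbabilityMeasure P ∧ Integrable (fun ξ => ‖ξ‖) P := by
    rintro P ⟨⟨h1, h2, h3⟩, -⟩
    exact ⟨h1, h3⟩
  have key : ∀ K : ℕ, 1 ≤ K → ∀ z : Vec n,
      wFun (Set.Icc Rmin Rmax) (wball Ξ (empirical samples) ε) z₀ z
        ≤ gSplit (wball Ξ (empirical samples) ε) z₀ Rmin Rmax K z ∧
      gSplit (wball Ξ (empirical samples) ε) z₀ Rmin Rmax K z
        - wFun (Set.Icc Rmin Rmax) (wball Ξ (empirical samples) ε) z₀ z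
        ≤ 2 * (Rmax - Rmin) / K :=
    fun K hK z => key_ineq z₀ z hRmm _ hQmem K hK
  refine ⟨fun K hK z _ => key K hK z, ?_⟩
  rw [Metric.tendstoUniformlyOn_iff]
  intro δ hδ
  have h0 : Filter.Tendsto (fun K : ℕ => 2 * (Rmax - Rmin) / K)
      Filter.atTop (nhds 0) := tendsto_const_div_atTop_nhds_zero_nat _
  filter_upwards [h0.eventually (gt_mem_nhds hδ), Filter.eventually_ge_atTop 1]
    with K h1 h2
  intro z _
  obtain ⟨ha, hb⟩ := key K h2 z
  rw [Real.dist_eq, abs_sub_comm, abs_of_nonneg (sub_nonneg.2 ha)]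
  exact lt_of_le_of_lt hb h1
end
end

section
/- Let (X, d) be a metric space, f : X → ℝ Lipschitz continuous with modulus L_f, and F, F′ ⊆ X nonempty closed sets admitting metric projections (every point of X has a nearest point in F and in F′). Let v = inf_{x∈F} f be attained with optimal solution set S ≠ ∅, and suppose the second-order growth condition holds: there exists ρ > 0 with f(x) − v ≥ ρ · dist(x, S)² for all x ∈ F. If h := ℍ(F′, F) ≤ 1, then every minimizer x′ of f over F′ satisfies dist(x′, S) ≤ (1 + √(2 L_f / ρ)) · √h. -/
open Metric Set

noncomputable section

/-- If f is Lipschitz with modulus L_f on a metric space, F and F′ are nonempty closed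
sets admitting metric projections, v = inf_F f is attained with optimal solution set
S ≠ ∅, the second-order growth condition holds on F with constant ρ > 0, and
h = ℍ(F′,F) ≤ 1, then every minimizer x′ of f over F′ satisfies
dist(x′, S) ≤ (1 + √(2 L_f/ρ)) √h. -/
theorem stmt15 {X : Type*} [MetricSpace X] (f : X → ℝ) (Lf : NNReal)
    (hf : LipschitzWith Lf f)
    (F F' : Set X) (hFne : F.Nonempty) (hF'ne : F'.Nonempty)
    (hFcl : IsClosed F) (hF'cl : IsClosed F')
    (hproj : ∀ x : X, ∃ y ∈ F, dist x y = infDist x F)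
    (hproj' : ∀ x : X, ∃ y ∈ F', dist x y = infDist x F')
    (v : ℝ) (hv : v = sInf (f '' F))
    (S : Set X) (hS : S = {x ∈ F | f x = v}) (hSne : S.Nonempty)
    (ρ : ℝ) (hρ : 0 < ρ)
    (hgrowth : ∀ x ∈ F, ρ * (infDist x S) ^ 2 ≤ f x - v)
    (hfin : EMetric.hausdorffEdist F' F ≠ ⊤)
    (hle : Metric.hausdorffDist F' F ≤ 1) :
    ∀ x' ∈ F', (∀ y ∈ F', f x' ≤ f y) →
      infDist x' S ≤
        (1 + Real.sqrt (2 * (Lf : ℝ) / ρ)) * Real.sqrt (Metric.hausdorffDist F' F) := by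
  intro x' hx' hmin
  set h := Metric.hausdorffDist F' F with hh
  have h0 : 0 ≤ h := Metric.hausdorffDist_nonneg
  have hL0 : (0:ℝ) ≤ Lf := Lf.coe_nonneg
  obtain ⟨s, hsS⟩ := hSne
  have hsF : s ∈ F := by rw [hS] at hsS; exact hsS.1
  have hfs : f s = v := by rw [hS] at hsS; exact hsS.2
  obtain ⟨x, hxF, hxd⟩ := hproj x'
  obtain ⟨y', hy'F', hyd⟩ := hproj' s
  have hx'h : dist x' x ≤ h := by
    rw [hxd]; exact infDist_le_hausdorffDist_of_mem hx' hfin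
  have hfin' : EMetric.hausdorffEdist F F' ≠ ⊤ := by
    rwa [EMetric.hausdorffEdist, Metric.hausdorffEDist_comm]
  have hsh : dist s y' ≤ h := by
    rw [hyd]
    calc infDist s F' ≤ Metric.hausdorffDist F F' :=
          infDist_le_hausdorffDist_of_mem hsF hfin'
      _ = h := Metric.hausdorffDist_comm
  -- f x' ≤ v + Lf h
  have hfy' : f y' - f s ≤ (Lf : ℝ) * dist s y' := by
    have := hf.dist_le_mul y' s
    rw [Real.dist_eq, dist_comm y' s] at this
    have := abs_le.mp this
    linarith [this.2]
  have h1 : f x' ≤ v + (Lf : ℝ) * h := by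
    have h2 := hmin y' hy'F'
    have h3 : (Lf : ℝ) * dist s y' ≤ (Lf : ℝ) * h := by
      exact mul_le_mul_of_nonneg_left hsh hL0
    linarith
  -- f x ≤ f x' + Lf h
  have hfx : f x - f x' ≤ (Lf : ℝ) * dist x' x := by
    have := hf.dist_le_mul x x'
    rw [Real.dist_eq, dist_comm x x'] at this
    have := abs_le.mp this
    linarith [this.2]
  have h4 : f x - v ≤ 2 * (Lf : ℝ) * h := by
    have h5 : (Lf : ℝ) * dist x' x ≤ (Lf : ℝ) * h :=
      mul_le_mul_of_nonneg_left hx'h hL0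
    linarith
  -- growth condition bound
  have hg := hgrowth x hxF
  have d0 : 0 ≤ infDist x S := infDist_nonneg
  have hsq : (infDist x S) ^ 2 ≤ 2 * (Lf : ℝ) / ρ * h := by
    rw [div_mul_eq_mul_div, le_div_iff₀ hρ]
    nlinarith
  have hdx : infDist x S ≤ Real.sqrt (2 * (Lf : ℝ) / ρ) * Real.sqrt h := by
    have := Real.sqrt_le_sqrt hsq
    rw [Real.sqrt_sq d0, Real.sqrt_mul (by positivity)] at this
    exact this
  -- h ≤ √h since h ≤ 1
  have hsh1 : h ≤ Real.sqrt h := by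
    have s1 : Real.sqrt h ≤ 1 := Real.sqrt_le_one.mpr hle
    have s2 : Real.sqrt h * Real.sqrt h = h := Real.mul_self_sqrt h0
    nlinarith [Real.sqrt_nonneg h]
  have htri : infDist x' S ≤ infDist x S + dist x' x :=
    infDist_le_infDist_add_dist
  have : infDist x' S ≤ h + Real.sqrt (2 * (Lf : ℝ) / ρ) * Real.sqrt h := by
    linarith
  calc infDist x' S ≤ h + Real.sqrt (2 * (Lf : ℝ) / ρ) * Real.sqrt h := this
    _ ≤ Real.sqrt h + Real.sqrt (2 * (Lf : ℝ) / ρ) * Real.sqrt h := by linarith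
    _ = (1 + Real.sqrt (2 * (Lf : ℝ) / ρ)) * Real.sqrt h := by ring
end
end
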